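/- Let F ⊆ ℝ² be the attractor of an IFS {S₁, S₂} where S_j(x) = ρ O_α x + w_j with common ratio ρ ∈ (0,1), common rotation O_α ∈ SO(2) through angle α with α/π irrational, S₁(F) ∩ S₂(F) = ∅, and 0 ∈ F (w₁ = 0). Then for every θ ∈ [0, π), every r ∈ (0, ρ], and every M ∈ ℕ, there exists τ ∈ (0, r) such that the projection π_θ(F) contains points t₁ < t₂ < … < t_M with τ/2 ≤ t_{j+1} − t_j ≤ 4τ for all 1 ≤ j < M. -/

import Mathlib

open Metric Set Real

noncomputable def rot (α : ℝ) (x : EuclideanSpace ℝ (Fin 2)) : EuclideanSpace ℝ (Fin 2) :=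
  (WithLp.equiv 2 (Fin 2 → ℝ)).symm
    ![x 0 * Real.cos α - x 1 * Real.sin α, x 0 * Real.sin α + x 1 * Real.cos α]

noncomputable def projDir (θ : ℝ) (x : EuclideanSpace ℝ (Fin 2)) : ℝ :=
  x 0 * Real.cos θ + x 1 * Real.sin θ

section rotlemmas

lemma rot_apply_zero (a : ℝ) (x : EuclideanSpace ℝ (Fin 2)) :
    rot a x 0 = x 0 * Real.cos a - x 1 * Real.sin a := by
  simp [rot]

lemma rot_apply_one (a : ℝ) (x : EuclideanSpace ℝ (Fin 2)) :
    rot a x 1 = x 0 * Real.sin a + x 1 * Real.cos a := by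
  simp [rot]

lemma euclid_ext {x y : EuclideanSpace ℝ (Fin 2)} (h0 : x 0 = y 0) (h1 : x 1 = y 1) : x = y := by
  ext i
  fin_cases i <;> assumption

lemma rot_add_eq (a b : ℝ) (x : EuclideanSpace ℝ (Fin 2)) :
    rot (a + b) x = rot a (rot b x) := by
  refine euclid_ext ?_ ?_ <;>
    simp only [rot_apply_zero, rot_apply_one, Real.cos_add, Real.sin_add] <;> ring

lemma rot_zero_eq (x : EuclideanSpace ℝ (Fin 2)) : rot 0 x = x := by
  refine euclid_ext ?_ ?_ <;> simp [rot_apply_zero, rot_apply_one]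

lemma rot_add_vec (a : ℝ) (x y : EuclideanSpace ℝ (Fin 2)) :
    rot a (x + y) = rot a x + rot a y := by
  have hx0 : (x + y) 0 = x 0 + y 0 := rfl
  have hx1 : (x + y) 1 = x 1 + y 1 := rfl
  refine euclid_ext ?_ ?_ <;>
    simp only [rot_apply_zero, rot_apply_one, hx0, hx1] <;>
    · rw [PiLp.add_apply]
      simp only [rot_apply_zero, rot_apply_one]
      ring

lemma rot_smul (a c : ℝ) (x : EuclideanSpace ℝ (Fin 2)) :
    rot a (c • x) = c • rot a x := by
  have hx0 : (c • x) 0 = c * x 0 := rfl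
  have hx1 : (c • x) 1 = c * x 1 := rfl
  refine euclid_ext ?_ ?_ <;>
    simp only [rot_apply_zero, rot_apply_one, hx0, hx1] <;>
    · rw [PiLp.smul_apply, smul_eq_mul]
      simp only [rot_apply_zero, rot_apply_one]
      ring

lemma norm_rot (a : ℝ) (x : EuclideanSpace ℝ (Fin 2)) : ‖rot a x‖ = ‖x‖ := by
  rw [EuclideanSpace.norm_eq, EuclideanSpace.norm_eq]
  congr 1
  simp only [Fin.sum_univ_two, rot_apply_zero, rot_apply_one, Real.norm_eq_abs, sq_abs]
  nlinarith [Real.sin_sq_add_cos_sq a]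

lemma projDir_add (θ : ℝ) (x y : EuclideanSpace ℝ (Fin 2)) :
    projDir θ (x + y) = projDir θ x + projDir θ y := by
  have hx0 : (x + y) 0 = x 0 + y 0 := rfl
  have hx1 : (x + y) 1 = x 1 + y 1 := rfl
  simp only [projDir, hx0, hx1]; ring

lemma projDir_smul (θ c : ℝ) (x : EuclideanSpace ℝ (Fin 2)) :
    projDir θ (c • x) = c * projDir θ x := by
  have hx0 : (c • x) 0 = c * x 0 := rfl
  have hx1 : (c • x) 1 = c * x 1 := rfl
  simp only [projDir, hx0, hx1]; ring

end rotlemmas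

set_option maxHeartbeats 1000000 in

lemma dense_nat_orbit (α : ℝ) (hα : Irrational (α / Real.pi)) :
    ∀ (c ε : ℝ), 0 < ε → ∀ N : ℕ, ∃ k : ℕ, N ≤ k ∧ ∃ K : ℤ, |(k : ℝ) * α - c - 2 * π * K| < ε := by
  intro c ε hε N
  -- replace ε by ε' := min ε 1
  set ε' : ℝ := min ε 1 with hε'def
  have hε' : 0 < ε' := lt_min hε one_pos
  have hε'le : ε' ≤ ε := min_le_left _ _
  have hε'1 : ε' ≤ 1 := min_le_right _ _
  -- the subgroup generated by α and 2π is dense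
  set G : AddSubgroup ℝ := AddSubgroup.closure {α, 2 * π} with hGdef
  have hdense : Dense (G : Set ℝ) := by
    rcases AddSubgroup.dense_or_cyclic G with h | ⟨a, ha⟩
    · exact h
    · exfalso
      have hαG : α ∈ G := AddSubgroup.subset_closure (by simp)
      have hπG : 2 * π ∈ G := AddSubgroup.subset_closure (by simp)
      rw [ha, AddSubgroup.mem_closure_singleton] at hαG hπG
      obtain ⟨m, hm⟩ := hαG
      obtain ⟨n, hn⟩ := hπG
      rw [zsmul_eq_mul] at hm hn
      have hπ0 : (π : ℝ) ≠ 0 := Real.pi_ne_zero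
      have hn0 : (n : ℝ) ≠ 0 := by
        intro h
        rw [h, zero_mul] at hn
        have : (2 : ℝ) * π ≠ 0 := by positivity
        exact this hn.symm
      have key : α / π = ((2 * m : ℚ) / (n : ℚ) : ℚ) := by
        have hnq : ((n : ℚ) : ℝ) ≠ 0 := by exact_mod_cast hn0
        push_cast
        rw [div_eq_div_iff hπ0 (by exact_mod_cast hn0)]
        -- α * n = 2 * m * π
        have h1 : α * n = m * (n * a) := by rw [← hm]; ring
        rw [hn] at h1
        rw [h1]; ring
      exact hα ⟨_, key.symm⟩
  -- get a small positive element of G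
  obtain ⟨β, hβG, hβmem⟩ :=
    hdense.exists_mem_open isOpen_Ioo (⟨ε' / 2, by constructor <;> linarith⟩ : (Ioo 0 ε').Nonempty)
  obtain ⟨hβ0, hβε⟩ := hβmem
  simp only [SetLike.mem_coe, hGdef, AddSubgroup.mem_closure_pair] at hβG
  obtain ⟨m, n, hmn⟩ := hβG
  rw [zsmul_eq_mul, zsmul_eq_mul] at hmn
  have hπpos : (0:ℝ) < π := Real.pi_pos
  have hm0 : m ≠ 0 := by
    intro h
    rw [h] at hmn
    push_cast at hmn
    rw [zero_mul, zero_add] at hmn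
    -- β = n * (2π) ∈ (0,1] impossible
    rcases lt_trichotomy n 0 with hn | hn | hn
    · have hn1 : n ≤ -1 := by omega
      have h1 : (n : ℝ) ≤ -1 := by exact_mod_cast hn1
      nlinarith [hβ0, hmn]
    · rw [hn] at hmn; push_cast at hmn; nlinarith [hβ0]
    · have h1 : (1 : ℝ) ≤ (n : ℝ) := by exact_mod_cast hn
      have : (2 : ℝ) * π ≤ β := by rw [← hmn]; nlinarith
      have hβ1 : β < 1 := lt_of_lt_of_le hβε hε'1
      nlinarith [Real.pi_gt_three]
  -- now the main construction
  have hβ1 : β ≤ 1 := le_of_lt (lt_of_lt_of_le hβε hε'1)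
  have h2π : (6 : ℝ) < 2 * π := by nlinarith [Real.pi_gt_three]
  set M₀ : ℕ := Nat.ceil (|c| + N + 1) with hM₀
  have hM₀ge : (|c| + N + 1 : ℝ) ≤ M₀ := Nat.le_ceil _
  have habs : -|c| ≤ c ∧ c ≤ |c| := ⟨neg_abs_le c, le_abs_self c⟩
  -- generic approximation step
  have main : ∀ t : ℝ, 0 ≤ t → ∃ j : ℕ, t < (j : ℝ) * β ∧ (j : ℝ) * β ≤ t + β := by
    intro t ht
    refine ⟨Nat.floor (t / β) + 1, ?_, ?_⟩
    · have h1 : t / β < (Nat.floor (t / β) : ℝ) + 1 := Nat.lt_floor_add_one _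
      have h3 := mul_lt_mul_of_pos_right h1 hβ0
      rw [div_mul_cancel₀ t hβ0.ne'] at h3
      push_cast
      linarith
    · have h1 : (Nat.floor (t / β) : ℝ) ≤ t / β := Nat.floor_le (div_nonneg ht hβ0.le)
      have h2 : (Nat.floor (t / β) : ℝ) * β ≤ t := by
        calc (Nat.floor (t / β) : ℝ) * β ≤ t / β * β := mul_le_mul_of_nonneg_right h1 hβ0.le
          _ = t := by field_simp
      push_cast
      nlinarith
  -- bounds on targets
  have hM₀R : (0 : ℝ) ≤ M₀ := Nat.cast_nonneg _
  rcases lt_or_gt_of_ne hm0 with hmneg | hmpos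
  · -- m < 0 : use k = j * (-m).toNat
    set t : ℝ := -c + 2 * π * M₀ with htdef
    have htN : (N : ℝ) ≤ t ∧ 1 ≤ t := by
      constructor <;> nlinarith [habs.1, habs.2, hM₀ge, h2π, hM₀R]
    obtain ⟨j, hj1, hj2⟩ := main t (by linarith [htN.2])
    have hjN : (N : ℝ) < j := by
      have h1 : t ≤ t / β := by
        rw [le_div_iff₀ hβ0]
        nlinarith [htN.2]
      have h2 : (j : ℝ) * β ≤ (j : ℝ) := by nlinarith [Nat.cast_nonneg (α := ℝ) j]
      nlinarith [htN.1]
    have hmpos' : 1 ≤ (-m).toNat := by omega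
    refine ⟨j * (-m).toNat, ?_, ⟨(j : ℤ) * n - M₀, ?_⟩⟩
    · have : (N : ℝ) < (j : ℝ) := hjN
      have hNj : N ≤ j := by exact_mod_cast this.le
      calc N ≤ j := hNj
        _ = j * 1 := by ring
        _ ≤ j * (-m).toNat := Nat.mul_le_mul_left _ hmpos'
    · have hcast : ((j * (-m).toNat : ℕ) : ℝ) = (j : ℝ) * (-(m : ℝ)) := by
        rw [Nat.cast_mul]
        congr 1
        rw [← Int.cast_natCast, Int.toNat_of_nonneg (by omega : (0:ℤ) ≤ -m)]
        push_cast
        ring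
      have hmα : (m : ℝ) * α = β - (n : ℝ) * (2 * π) := by linarith [hmn]
      rw [hcast]
      have hexp : (j : ℝ) * (-(m : ℝ)) * α - c - 2 * π * ((j : ℤ) * n - (M₀ : ℤ) : ℤ) = t - (j : ℝ) * β := by
        push_cast
        have : (j : ℝ) * (-(m : ℝ)) * α = -((j : ℝ) * ((m : ℝ) * α)) := by ring
        rw [this, hmα, htdef]
        ring
      rw [hexp, abs_sub_comm]
      rw [abs_of_pos (by linarith)]
      have : (j : ℝ) * β - t ≤ β := by linarith
      linarith [lt_of_lt_of_le hβε hε'le, hβε, hε'le]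
  · -- m > 0 : use k = j * m.toNat
    set t : ℝ := c + 2 * π * M₀ with htdef
    have htN : (N : ℝ) ≤ t ∧ 1 ≤ t := by
      constructor <;> nlinarith [habs.1, habs.2, hM₀ge, h2π, hM₀R]
    obtain ⟨j, hj1, hj2⟩ := main t (by linarith [htN.2])
    have hjN : (N : ℝ) < j := by
      have h1 : t ≤ t / β := by
        rw [le_div_iff₀ hβ0]
        nlinarith [htN.2]
      have h2 : (j : ℝ) * β ≤ (j : ℝ) := by nlinarith [Nat.cast_nonneg (α := ℝ) j]
      nlinarith [htN.1]
    have hmpos' : 1 ≤ m.toNat := by omega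
    refine ⟨j * m.toNat, ?_, ⟨(M₀ : ℤ) - (j : ℤ) * n, ?_⟩⟩
    · have hNj : N ≤ j := by exact_mod_cast hjN.le
      calc N ≤ j := hNj
        _ = j * 1 := by ring
        _ ≤ j * m.toNat := Nat.mul_le_mul_left _ hmpos'
    · have hcast : ((j * m.toNat : ℕ) : ℝ) = (j : ℝ) * (m : ℝ) := by
        rw [Nat.cast_mul]
        congr 1
        rw [← Int.cast_natCast, Int.toNat_of_nonneg (by omega : (0:ℤ) ≤ m)]
      have hmα : (m : ℝ) * α = β - (n : ℝ) * (2 * π) := by linarith [hmn]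
      rw [hcast]
      have hexp : (j : ℝ) * (m : ℝ) * α - c - 2 * π * ((M₀ : ℤ) - (j : ℤ) * n : ℤ) = (j : ℝ) * β - t := by
        push_cast
        have : (j : ℝ) * (m : ℝ) * α = (j : ℝ) * ((m : ℝ) * α) := by ring
        rw [this, hmα, htdef]
        ring
      rw [hexp]
      rw [abs_of_pos (by linarith)]
      have : (j : ℝ) * β - t ≤ β := by linarith
      linarith [lt_of_lt_of_le hβε hε'le]

set_option maxHeartbeats 2000000 in

lemma windows (ρ α : ℝ) (hρ0 : 0 < ρ) (hρ1 : ρ < 1)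
    (dens : ∀ (c ε : ℝ), 0 < ε → ∀ N : ℕ, ∃ k : ℕ, N ≤ k ∧ ∃ K : ℤ,
      |(k : ℝ) * α - c - 2 * π * K| < ε) :
    ∀ (m : ℕ) (lam : ℝ), 0 < lam → lam ≤ 1 / 2 →
      ∃ (D : ℕ → ℕ) (xs eps u : ℝ), D 0 = 0 ∧ StrictMono D ∧ 0 < eps ∧ 0 < u ∧ u ≤ lam ∧
        ∀ x : ℝ, |x - xs| < eps → ∀ j < m,
          ρ ^ (D j) * Real.cos (x + (D j : ℝ) * α) ∈ Set.Ioo u (u * (1 + lam)) := by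
  intro m
  induction m with
  | zero =>
    intro lam hlam0 _
    exact ⟨id, 0, 1, lam / 2, rfl, strictMono_id, one_pos, by linarith, by linarith,
      fun x _ j hj => absurd hj (Nat.not_lt_zero j)⟩
  | succ m ih =>
    intro lam hlam0 hlam1
    obtain ⟨D, xs, eps, u, hD0, hDmono, heps, hu, hulam, H⟩ := ih lam hlam0 hlam1
    have hπ : (0:ℝ) < π := Real.pi_pos
    set ε₃ : ℝ := min (eps / 4) (π / 4) with hε₃def
    have hε₃0 : 0 < ε₃ := lt_min (by linarith) (by linarith)
    have hε₃eps : ε₃ ≤ eps / 4 := min_le_left _ _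
    have hε₃π : ε₃ ≤ π / 4 := min_le_right _ _
    have hsin : 0 < Real.sin ε₃ := Real.sin_pos_of_pos_of_lt_pi hε₃0 (by linarith)
    have hsin1 : Real.sin ε₃ ≤ 1 := Real.sin_le_one _
    obtain ⟨N₁, hN₁⟩ := exists_pow_lt_of_lt_one hsin hρ1
    obtain ⟨e, heN, K, herr⟩ := dens (xs - π / 2) ε₃ hε₃0 (max N₁ 1)
    have he1 : 1 ≤ e := le_trans (le_max_right _ _) heN
    have heN₁ : N₁ ≤ e := le_trans (le_max_left _ _) heN
    have hρe0 : 0 < ρ ^ e := pow_pos hρ0 e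
    have hρe : ρ ^ e < Real.sin ε₃ :=
      lt_of_le_of_lt (pow_le_pow_of_le_one hρ0.le hρ1.le heN₁) hN₁
    set u' : ℝ := ρ ^ e * u with hu'def
    have hu' : 0 < u' := mul_pos hρe0 hu
    have hρe1 : ρ ^ e ≤ 1 := pow_le_one₀ hρ0.le hρ1.le
    have hu'lam : u' ≤ lam := le_trans (by nlinarith) hulam
    have hkey : u' * (1 + lam) < Real.sin ε₃ := by
      have h1 : u * (1 + lam) ≤ 3 / 4 := by nlinarith
      have : u' * (1 + lam) = ρ ^ e * (u * (1 + lam)) := by ring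
      rw [this]
      nlinarith
    set arg : ℝ := u' * (1 + lam / 2) with hargdef
    have harg0 : 0 < arg := by nlinarith
    have hargsin : arg < Real.sin ε₃ := by nlinarith
    have harg1 : arg ≤ 1 := le_trans hargsin.le hsin1
    set ys : ℝ := Real.arcsin arg with hysdef
    have hys0 : 0 < ys := Real.arcsin_pos.2 harg0
    have hysε₃ : ys ≤ ε₃ := by
      have h1 : Real.arcsin arg ≤ Real.arcsin (Real.sin ε₃) := Real.monotone_arcsin hargsin.le
      rwa [Real.arcsin_sin (by linarith) (by linarith)] at h1
    set xs' : ℝ := π / 2 - ys with hxs'def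
    have hcosxs' : Real.cos xs' = arg := by
      rw [hxs'def, Real.cos_pi_div_two_sub, hysdef, Real.sin_arcsin (by linarith) harg1]
    -- open neighbourhood where cos lies in the new window
    have hS : IsOpen (Real.cos ⁻¹' Set.Ioo u' (u' * (1 + lam))) :=
      isOpen_Ioo.preimage Real.continuous_cos
    have hxs'S : xs' ∈ Real.cos ⁻¹' Set.Ioo u' (u' * (1 + lam)) := by
      simp only [Set.mem_preimage, Set.mem_Ioo, hcosxs']
      constructor <;> nlinarith
    obtain ⟨δ, hδ0, hball⟩ := Metric.isOpen_iff.1 hS xs' hxs'S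
    set eps' : ℝ := min δ (eps / 4) with heps'def
    have heps'0 : 0 < eps' := lt_min hδ0 (by linarith)
    -- the new level sequence
    refine ⟨fun j => match j with | 0 => 0 | (i + 1) => e + D i, xs', eps', u', rfl, ?_, heps'0,
      hu', hu'lam, ?_⟩
    · apply strictMono_nat_of_lt_succ
      intro n
      match n with
      | 0 => show 0 < e + D 0; omega
      | (i + 1) => show e + D i < e + D (i + 1); exact Nat.add_lt_add_left (hDmono (Nat.lt_succ_self i)) e
    · intro x hx j hj
      match j with
      | 0 =>
        have hxball : x ∈ Metric.ball xs' δ := by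
          rw [Metric.mem_ball, Real.dist_eq]
          exact lt_of_lt_of_le hx (min_le_left _ _)
        have := hball hxball
        simpa using this
      | (i + 1) =>
        have hi : i < m := by omega
        set z : ℝ := x + (e : ℝ) * α - 2 * π * K with hzdef
        have hzxs : |z - xs| < eps := by
          have hdecomp : z - xs = (x - xs') + (xs' - π / 2) + ((e : ℝ) * α - (xs - π / 2) - 2 * π * K) := by
            rw [hzdef, hxs'def]; ring
          have h1 : |xs' - π / 2| = ys := by rw [hxs'def]; rw [abs_of_nonpos (by linarith)]; ring
          have h2 : |x - xs'| < eps' := hx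
          calc |z - xs| ≤ |x - xs'| + |xs' - π / 2| + |(e : ℝ) * α - (xs - π / 2) - 2 * π * K| := by
                rw [hdecomp]; exact (abs_add_three _ _ _)
            _ < eps' + ys + ε₃ := by
                apply add_lt_add_of_lt_of_le (add_lt_add_of_lt_of_le h2 (le_of_eq h1)) herr.le
            _ ≤ eps / 4 + eps / 4 + eps / 4 := by
                have := min_le_right δ (eps / 4)
                have h3 : eps' ≤ eps / 4 := this
                have h4 : ys ≤ eps / 4 := le_trans hysε₃ hε₃eps
                have h5 : ε₃ ≤ eps / 4 := hε₃eps
                linarith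
            _ < eps := by linarith
        have hIH := H z hzxs i hi
        have hcosrw : Real.cos (x + ((e + D i : ℕ) : ℝ) * α) = Real.cos (z + (D i : ℝ) * α) := by
          have harg : x + ((e + D i : ℕ) : ℝ) * α = (z + (D i : ℝ) * α) + (K : ℝ) * (2 * π) := by
            rw [hzdef]; push_cast; ring
          rw [harg, Real.cos_add_int_mul_two_pi]
        show ρ ^ (e + D i) * Real.cos (x + ((e + D i : ℕ) : ℝ) * α) ∈ Set.Ioo u' (u' * (1 + lam))
        have h2 : ρ ^ (e + D i) * Real.cos (z + (D i : ℝ) * α)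
            = ρ ^ e * (ρ ^ D i * Real.cos (z + (D i : ℝ) * α)) := by
          rw [pow_add]; ring
        rw [hcosrw, h2]
        constructor
        · rw [hu'def]
          exact mul_lt_mul_of_pos_left hIH.1 hρe0
        · have h3 : u' * (1 + lam) = ρ ^ e * (u * (1 + lam)) := by rw [hu'def]; ring
          rw [h3]
          exact mul_lt_mul_of_pos_left hIH.2 hρe0


section polar

lemma polar_proj (v : EuclideanSpace ℝ (Fin 2)) (hv : v ≠ 0) (θ : ℝ) :
    ∃ R ψ : ℝ, 0 < R ∧ ∀ b : ℝ, projDir θ (rot b v) = R * Real.cos (b - ψ) := by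
  have hform : ∀ b : ℝ, projDir θ (rot b v)
      = (v 0 * Real.cos b - v 1 * Real.sin b) * Real.cos θ
        + (v 0 * Real.sin b + v 1 * Real.cos b) * Real.sin θ := by
    intro b
    simp [projDir, rot_apply_zero, rot_apply_one]
  set A := v 0 * Real.cos θ + v 1 * Real.sin θ with hA
  set B := v 0 * Real.sin θ - v 1 * Real.cos θ with hB
  have hv01 : v 0 ≠ 0 ∨ v 1 ≠ 0 := by
    by_contra h
    push_neg at h
    apply hv
    ext i
    fin_cases i <;> simp [h.1, h.2]
  have hAB : A ^ 2 + B ^ 2 = (v 0) ^ 2 + (v 1) ^ 2 := by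
    simp only [hA, hB]
    nlinarith [Real.sin_sq_add_cos_sq θ]
  have hABpos : 0 < A ^ 2 + B ^ 2 := by
    rw [hAB]
    rcases hv01 with h | h <;> positivity
  set z : ℂ := ⟨A, B⟩ with hz
  have hzne : z ≠ 0 := by
    intro h
    have : z.re = 0 ∧ z.im = 0 := by rw [h]; exact ⟨rfl, rfl⟩
    simp only [hz] at this
    nlinarith [this.1, this.2]
  refine ⟨‖z‖, Complex.arg z, norm_pos_iff.mpr hzne, fun b => ?_⟩
  have hcos : Real.cos (Complex.arg z) = A / ‖z‖ := Complex.cos_arg hzne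
  have hsin : Real.sin (Complex.arg z) = B / ‖z‖ := by
    simpa using Complex.sin_arg z
  have hRne : (‖z‖ : ℝ) ≠ 0 := ne_of_gt (norm_pos_iff.mpr hzne)
  rw [hform, Real.cos_sub, mul_add, hcos, hsin]
  field_simp
  ring

end polar

section Fstruct

noncomputable def rotL (a : ℝ) : EuclideanSpace ℝ (Fin 2) →ₗ[ℝ] EuclideanSpace ℝ (Fin 2) where
  toFun := rot a
  map_add' := rot_add_vec a
  map_smul' := fun c x => rot_smul a c x

lemma rot_sum (a : ℝ) (s : Finset ℕ) (f : ℕ → EuclideanSpace ℝ (Fin 2)) :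
    rot a (∑ n ∈ s, f n) = ∑ n ∈ s, rot a (f n) :=
  map_sum (rotL a) f s

lemma projDir_sum (θ : ℝ) (s : Finset ℕ) (f : ℕ → EuclideanSpace ℝ (Fin 2)) :
    projDir θ (∑ n ∈ s, f n) = ∑ n ∈ s, projDir θ (f n) := by
  classical
  induction s using Finset.induction_on with
  | empty =>
    simp only [Finset.sum_empty]
    have : projDir θ 0 = 0 := by simp [projDir]
    exact this
  | insert a s hns ih =>
    rw [Finset.sum_insert hns, Finset.sum_insert hns, projDir_add, ih]

variable {ρ α : ℝ} {w : Fin 2 → EuclideanSpace ℝ (Fin 2)}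
    {F : Set (EuclideanSpace ℝ (Fin 2))}

lemma maps_into_F
    (hattr : F = (fun x => ρ • rot α x + w 0) '' F ∪ (fun x => ρ • rot α x + w 1) '' F)
    (b : Fin 2) : ∀ x ∈ F, ρ • rot α x + w b ∈ F := by
  intro x hx
  have h0 : (fun x => ρ • rot α x + w 0) '' F ⊆ F := by
    conv_rhs => rw [hattr]
    exact Set.subset_union_left
  have h1 : (fun x => ρ • rot α x + w 1) '' F ⊆ F := by
    conv_rhs => rw [hattr]
    exact Set.subset_union_right
  fin_cases b
  · exact h0 ⟨x, hx, rfl⟩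
  · exact h1 ⟨x, hx, rfl⟩

lemma zero_mem_F (hρ0 : 0 < ρ) (hρ1 : ρ < 1) (hw0 : w 0 = 0)
    (hFne : F.Nonempty) (hFc : IsCompact F)
    (hattr : F = (fun x => ρ • rot α x + w 0) '' F ∪ (fun x => ρ • rot α x + w 1) '' F) :
    (0 : EuclideanSpace ℝ (Fin 2)) ∈ F := by
  obtain ⟨x₀, hx₀⟩ := hFne
  set g : ℕ → EuclideanSpace ℝ (Fin 2) := fun m => (ρ ^ m) • rot ((m : ℝ) * α) x₀ with hg
  have hg0 : g 0 = x₀ := by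
    simp only [hg, pow_zero, Nat.cast_zero, zero_mul, one_smul, rot_zero_eq]
  have hstep : ∀ m, g (m + 1) = ρ • rot α (g m) + w 0 := by
    intro m
    rw [hw0, add_zero, hg]
    show (ρ ^ (m + 1)) • rot (((m + 1 : ℕ) : ℝ) * α) x₀ = ρ • rot α ((ρ ^ m) • rot ((m : ℝ) * α) x₀)
    rw [rot_smul, smul_smul]
    have h1 : ρ * ρ ^ m = ρ ^ (m + 1) := by ring
    rw [h1]
    congr 1
    have h2 : ((m + 1 : ℕ) : ℝ) * α = α + (m : ℝ) * α := by push_cast; ring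
    rw [h2, rot_add_eq]
  have hmem : ∀ m, g m ∈ F := by
    intro m
    induction m with
    | zero => rw [hg0]; exact hx₀
    | succ m ihm => rw [hstep m]; exact maps_into_F hattr 0 _ ihm
  have hnorm : ∀ m, ‖g m‖ = ρ ^ m * ‖x₀‖ := by
    intro m
    rw [hg]
    show ‖(ρ ^ m) • rot ((m : ℝ) * α) x₀‖ = ρ ^ m * ‖x₀‖
    rw [norm_smul, norm_rot, Real.norm_eq_abs, abs_of_pos (pow_pos hρ0 m)]
  have htend : Filter.Tendsto g Filter.atTop (nhds 0) := by
    rw [tendsto_zero_iff_norm_tendsto_zero]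
    have h1 := (tendsto_pow_atTop_nhds_zero_of_lt_one hρ0.le hρ1).mul_const ‖x₀‖
    rw [zero_mul] at h1
    refine h1.congr ?_
    intro m
    exact (hnorm m).symm
  exact hFc.isClosed.mem_of_tendsto htend (Filter.Eventually.of_forall hmem)

/-- the basic building-block vector at level `n` -/
noncomputable def cvec (ρ α : ℝ) (w1 : EuclideanSpace ℝ (Fin 2)) (n : ℕ) :
    EuclideanSpace ℝ (Fin 2) :=
  (ρ ^ n) • rot ((n : ℝ) * α) w1

lemma cvec_succ (ρ α : ℝ) (w1 : EuclideanSpace ℝ (Fin 2)) (n : ℕ) (hn : n ≠ 0) :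
    cvec ρ α w1 n = ρ • rot α (cvec ρ α w1 (n - 1)) := by
  unfold cvec
  rw [rot_smul, smul_smul]
  have h2 : ρ * ρ ^ (n - 1) = ρ ^ n := by
    rw [← pow_succ']
    congr 1
    omega
  rw [h2]
  congr 1
  have h3 : ((n : ℝ)) * α = α + ((n - 1 : ℕ) : ℝ) * α := by
    have h4 : ((n - 1 : ℕ) : ℝ) = (n : ℝ) - 1 := by
      have h5 : 1 ≤ n := Nat.one_le_iff_ne_zero.2 hn
      push_cast [h5]
      ring
    rw [h4]
    ring
  rw [h3, rot_add_eq]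

lemma cvec_zero (ρ α : ℝ) (w1 : EuclideanSpace ℝ (Fin 2)) : cvec ρ α w1 0 = w1 := by
  unfold cvec
  simp [rot_zero_eq]

lemma sum_mem_F (hρ0 : 0 < ρ) (hρ1 : ρ < 1) (hw0 : w 0 = 0)
    (hFne : F.Nonempty) (hFc : IsCompact F)
    (hattr : F = (fun x => ρ • rot α x + w 0) '' F ∪ (fun x => ρ • rot α x + w 1) '' F) :
    ∀ (L : ℕ) (s : Finset ℕ), (∀ n ∈ s, n < L) →
      (∑ n ∈ s, cvec ρ α (w 1) n) ∈ F := by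
  classical
  intro L
  induction L with
  | zero =>
    intro s hs
    have hse : s = ∅ := Finset.eq_empty_of_forall_notMem fun n hn => Nat.not_lt_zero n (hs n hn)
    rw [hse, Finset.sum_empty]
    exact zero_mem_F hρ0 hρ1 hw0 hFne hFc hattr
  | succ L ihL =>
    intro s hs
    have hs'L : ∀ n ∈ (s.erase 0).image (fun n => n - 1), n < L := by
      intro n hn
      rw [Finset.mem_image] at hn
      obtain ⟨m, hm, hmn⟩ := hn
      have hm0 : m ≠ 0 := Finset.ne_of_mem_erase hm
      have hmL : m < L + 1 := hs m (Finset.mem_of_mem_erase hm)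
      omega
    have hP' := ihL _ hs'L
    have hkey : ∑ n ∈ s.erase 0, cvec ρ α (w 1) n
        = ρ • rot α (∑ n ∈ (s.erase 0).image (fun n => n - 1), cvec ρ α (w 1) n) := by
      have h1 : ∑ n ∈ (s.erase 0).image (fun n => n - 1), cvec ρ α (w 1) n
          = ∑ n ∈ s.erase 0, cvec ρ α (w 1) (n - 1) := by
        refine Finset.sum_image ?_
        intro a ha b hb hab
        have ha0 : a ≠ 0 := Finset.ne_of_mem_erase ha
        have hb0 : b ≠ 0 := Finset.ne_of_mem_erase hb
        have hab' : a - 1 = b - 1 := hab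
        omega
      rw [h1, rot_sum, Finset.smul_sum]
      refine Finset.sum_congr rfl ?_
      intro n hn
      exact cvec_succ ρ α (w 1) n (Finset.ne_of_mem_erase hn)
    by_cases h0s : 0 ∈ s
    · have hsplit : ∑ n ∈ s.erase 0, cvec ρ α (w 1) n + cvec ρ α (w 1) 0
          = ∑ n ∈ s, cvec ρ α (w 1) n :=
        Finset.sum_erase_add s _ h0s
      rw [← hsplit, hkey, cvec_zero]
      exact maps_into_F hattr 1 _ hP'
    · have hsplit : s.erase 0 = s := Finset.erase_eq_of_notMem h0s
      rw [← hsplit, hkey]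
      have hm := maps_into_F hattr 0 _ hP'
      rwa [hw0, add_zero] at hm

end Fstruct

set_option maxHeartbeats 2000000 in
/-- For the attractor of two equal-ratio irrational-rotation similarities with disjoint
images, every projection contains, at all scales, `M` roughly `2τ`-spaced points. -/
theorem stmt_12 (ρ α : ℝ) (hρ : ρ ∈ Set.Ioo (0 : ℝ) 1) (hα : Irrational (α / Real.pi))
    (w : Fin 2 → EuclideanSpace ℝ (Fin 2)) (hw1 : w 0 = 0)
    (F : Set (EuclideanSpace ℝ (Fin 2))) (hFne : F.Nonempty) (hFc : IsCompact F)
    (hattr : F = (fun x => ρ • rot α x + w 0) '' F ∪ (fun x => ρ • rot α x + w 1) '' F)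
    (hdisj : ((fun x => ρ • rot α x + w 0) '' F) ∩ ((fun x => ρ • rot α x + w 1) '' F) = ∅) :
    ∀ θ ∈ Set.Ico (0 : ℝ) Real.pi, ∀ r ∈ Set.Ioc (0 : ℝ) ρ, ∀ M : ℕ,
      ∃ τ ∈ Set.Ioo (0 : ℝ) r, ∃ ts : Fin M → ℝ,
        StrictMono ts ∧ (∀ j, ts j ∈ projDir θ '' F) ∧
        ∀ (i : Fin M) (h : (i : ℕ) + 1 < M),
          τ / 2 ≤ ts ⟨(i : ℕ) + 1, h⟩ - ts i ∧ ts ⟨(i : ℕ) + 1, h⟩ - ts i ≤ 4 * τ := by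
  obtain ⟨hρ0, hρ1⟩ := hρ
  intro θ hθ r hr M
  obtain ⟨hr0, hrρ⟩ := hr
  -- the translation of the second map is nonzero
  have hw1ne : w 1 ≠ 0 := by
    intro h
    have heq : (fun x => ρ • rot α x + w 0) '' F = (fun x => ρ • rot α x + w 1) '' F := by
      rw [hw1, h]
    rw [heq, Set.inter_self] at hdisj
    have h2 : F = ∅ := by
      conv_lhs => rw [hattr]
      rw [heq, Set.union_self, hdisj]
    exact hFne.ne_empty h2
  obtain ⟨R, ψ, hR, hpolar⟩ := polar_proj (w 1) hw1ne θ
  have dens := dense_nat_orbit α hα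
  obtain ⟨D, xs, eps, u, hD0, hDmono, heps, hu, hulam, H⟩ :=
    windows ρ α hρ0 hρ1 dens M (1 / 2) (by norm_num) (le_refl _)
  obtain ⟨N, hN⟩ := exists_pow_lt_of_lt_one (div_pos hr0 hR) hρ1
  obtain ⟨k, hkN, K, hkerr⟩ := dens (xs + ψ) eps heps N
  set x : ℝ := (k : ℝ) * α - ψ - 2 * π * K with hxdef
  have hxxs : |x - xs| < eps := by
    have : x - xs = (k : ℝ) * α - (xs + ψ) - 2 * π * K := by rw [hxdef]; ring
    rw [this]
    exact hkerr
  set τ : ℝ := ρ ^ k * R * u with hτdef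
  have hρk0 : 0 < ρ ^ k := pow_pos hρ0 k
  have hτ0 : 0 < τ := by positivity
  have hτr : τ < r := by
    have h1 : ρ ^ k ≤ ρ ^ N := pow_le_pow_of_le_one hρ0.le hρ1.le hkN
    have h2 : ρ ^ k * R < r := by
      have h3 : ρ ^ N * R < r := by
        have := mul_lt_mul_of_pos_right hN hR
        rwa [div_mul_cancel₀ r hR.ne'] at this
      nlinarith
    nlinarith
  -- values of the projected toggles
  have hval : ∀ j < M, projDir θ (cvec ρ α (w 1) (k + D j)) ∈ Set.Ioo τ (2 * τ) := by
    intro j hj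
    have h1 : projDir θ (cvec ρ α (w 1) (k + D j))
        = ρ ^ (k + D j) * (R * Real.cos (((k + D j : ℕ) : ℝ) * α - ψ)) := by
      unfold cvec
      rw [projDir_smul, hpolar]
    have h2 : Real.cos (((k + D j : ℕ) : ℝ) * α - ψ) = Real.cos (x + (D j : ℝ) * α) := by
      have harg : ((k + D j : ℕ) : ℝ) * α - ψ = (x + (D j : ℝ) * α) + (K : ℝ) * (2 * π) := by
        rw [hxdef]; push_cast; ring
      rw [harg, Real.cos_add_int_mul_two_pi]
    have h3 := H x hxxs j hj
    obtain ⟨h3a, h3b⟩ := h3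
    have h4 : projDir θ (cvec ρ α (w 1) (k + D j))
        = (ρ ^ k * R) * (ρ ^ (D j) * Real.cos (x + (D j : ℝ) * α)) := by
      rw [h1, h2, pow_add]; ring
    rw [h4]
    have hkR : 0 < ρ ^ k * R := by positivity
    constructor
    · have := mul_lt_mul_of_pos_left h3a hkR
      calc τ = ρ ^ k * R * u := hτdef
        _ < _ := this
    · have := mul_lt_mul_of_pos_left h3b hkR
      have h5 : ρ ^ k * R * (u * (1 + 1 / 2)) ≤ 2 * τ := by
        rw [hτdef]; nlinarith
      linarith
  -- the chain of points of F
  classical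
  set pt : ℕ → EuclideanSpace ℝ (Fin 2) :=
    fun i => ∑ n ∈ (Finset.range i).image (fun j => k + D j), cvec ρ α (w 1) n with hptdef
  set g : ℕ → ℝ := fun i => projDir θ (pt i) with hgdef
  have hgstep : ∀ i, g (i + 1) = g i + projDir θ (cvec ρ α (w 1) (k + D i)) := by
    intro i
    have him : (Finset.range (i + 1)).image (fun j => k + D j)
        = insert (k + D i) ((Finset.range i).image (fun j => k + D j)) := by
      rw [Finset.range_add_one, Finset.image_insert]
    have hnotmem : (k + D i) ∉ (Finset.range i).image (fun j => k + D j) := by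
      rw [Finset.mem_image]
      rintro ⟨j, hj, hjeq⟩
      rw [Finset.mem_range] at hj
      have := hDmono hj
      omega
    show projDir θ (pt (i + 1)) = projDir θ (pt i) + projDir θ (cvec ρ α (w 1) (k + D i))
    rw [hptdef]
    show projDir θ (∑ n ∈ (Finset.range (i + 1)).image (fun j => k + D j), cvec ρ α (w 1) n) = _
    rw [him, Finset.sum_insert hnotmem, projDir_add]
    ring
  have hkeystep : ∀ i < M, g i < g (i + 1) := by
    intro i hi
    rw [hgstep i]
    have := (hval i hi).1
    linarith
  have hmono : ∀ a b : ℕ, a < b → b ≤ M → g a < g b := by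
    intro a b
    induction b with
    | zero => omega
    | succ b ihb =>
      intro hab hbM
      rcases Nat.lt_or_ge a b with h | h
      · exact lt_trans (ihb h (by omega)) (hkeystep b (by omega))
      · have : a = b := by omega
        rw [this]
        exact hkeystep b (by omega)
  have hptF : ∀ i : ℕ, i ≤ M → pt i ∈ F := by
    intro i hiM
    rw [hptdef]
    apply sum_mem_F hρ0 hρ1 hw1 hFne hFc hattr (k + D M + 1)
    intro n hn
    rw [Finset.mem_image] at hn
    obtain ⟨j, hj, hjeq⟩ := hn
    rw [Finset.mem_range] at hj
    have hjM : j ≤ M := by omega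
    have := hDmono.le_iff_le.2 hjM
    omega
  refine ⟨τ, ⟨hτ0, hτr⟩, fun i => g i.1, ?_, ?_, ?_⟩
  · intro a b hab
    exact hmono a.1 b.1 hab b.isLt.le
  · intro j
    exact ⟨pt j.1, hptF j.1 j.isLt.le, rfl⟩
  · intro i hi
    show τ / 2 ≤ g (i.1 + 1) - g i.1 ∧ g (i.1 + 1) - g i.1 ≤ 4 * τ
    rw [hgstep i.1]
    have hv := hval i.1 (by omega)
    constructor
    · linarith [hv.1]
    · linarith [hv.2]
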